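/- Let P be a toric monoid (fs with torsion-free group envelope), with P^gp ≅ ℤ^r, and let v ∈ ℤ^r be the image of 1 under a homomorphism ℕ → P composed with P → P^gp ≅ ℤ^r. Write v = λ·v₀ with λ ∈ ℤ and v₀ a primitive vector. Then for any positive integer d, the torsion subgroup of Q^gp = (ℤ^r ⊕ ℤ)/⟨(v, -d)⟩ is cyclic of order gcd(d, λ); in particular its order divides gcd(d, λ). -/

import Mathlib

/-- Let `v ∈ ℤ^r` and write `v = λ • v₀` with `v₀` a primitive vector
(the gcd of its coordinates is `1`). Then for any `d > 0`, the torsion subgroup of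
`Q^gp = (ℤ^r ⊕ ℤ)/⟨(v, -d)⟩` is cyclic of order `gcd(d, λ)`; in particular its order
divides `gcd(d, λ)`. -/
theorem torsion_of_pushout_envelope
    (r : ℕ) (v v₀ : Fin r → ℤ) (lam : ℤ)
    (hv : v = lam • v₀)
    -- v₀ is primitive: the gcd of its coordinates is 1
    (hprim : ∀ k : ℤ, 0 < k → (∀ i, k ∣ v₀ i) → k = 1)
    (d : ℕ) (hd : 0 < d)
    {H : Type*} [AddCommGroup H] (π : ((Fin r → ℤ) × ℤ) →+ H)
    (hπsurj : Function.Surjective π)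
    (hπker : π.ker = AddSubgroup.zmultiples ((v, -(d : ℤ)) : (Fin r → ℤ) × ℤ)) :
    Nonempty ((AddCommGroup.torsion H) ≃+ ZMod (Nat.gcd d lam.natAbs)) := by
  set g : ℕ := Nat.gcd d lam.natAbs with hg
  have hgint : g = Int.gcd (d : ℤ) lam := by
    simp [hg, Int.gcd]
  have hgpos : 0 < g := Nat.gcd_pos_of_pos_left _ hd
  have hgZpos : (0 : ℤ) < (g : ℤ) := by exact_mod_cast hgpos
  have hg_dvd_d : (g : ℤ) ∣ (d : ℤ) := by
    rw [hgint]; exact Int.gcd_dvd_left _ _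
  have hg_dvd_lam : (g : ℤ) ∣ lam := by
    rw [hgint]; exact Int.gcd_dvd_right _ _
  set d' : ℤ := (d : ℤ) / (g : ℤ) with hd'def
  set lam' : ℤ := lam / (g : ℤ) with hlam'def
  have hdd' : (d : ℤ) = (g : ℤ) * d' := (Int.mul_ediv_cancel' hg_dvd_d).symm
  have hll' : lam = (g : ℤ) * lam' := (Int.mul_ediv_cancel' hg_dvd_lam).symm
  have hdZpos : (0 : ℤ) < (d : ℤ) := by exact_mod_cast hd
  have hd'pos : 0 < d' := by
    rcases lt_trichotomy d' 0 with h | h | h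
    · nlinarith
    · rw [h, mul_zero] at hdd'; exact absurd hdd' hdZpos.ne'
    · exact h
  have hd'ne : d' ≠ 0 := hd'pos.ne'
  have hcop : Int.gcd lam' d' = 1 := by
    have h0 : 0 < Int.gcd (d : ℤ) lam := by omega
    have := Int.gcd_div_gcd_div_gcd h0
    rw [← hgint] at this
    rw [hlam'def, hd'def, Int.gcd_comm]
    exact this
  have hcop' : IsCoprime lam' d' := Int.isCoprime_iff_gcd_eq_one.mpr hcop
  obtain ⟨α, β, hαβ⟩ := hcop'
  -- the candidate generator of the torsion subgroup
  set u : (Fin r → ℤ) × ℤ := (lam' • v₀, -d') with hu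
  have hgu : (g : ℤ) • u = ((v, -(d : ℤ)) : (Fin r → ℤ) × ℤ) := by
    rw [hu, Prod.smul_mk]
    refine Prod.ext ?_ ?_
    · show (g : ℤ) • lam' • v₀ = v
      rw [smul_smul, ← hll', hv]
    · show (g : ℤ) • (-d') = -(d : ℤ)
      rw [smul_eq_mul, hdd']; ring
  have hmem : ∀ w : (Fin r → ℤ) × ℤ, π w = 0 ↔
      ∃ m : ℤ, m • ((v, -(d : ℤ)) : (Fin r → ℤ) × ℤ) = w := by
    intro w
    rw [← AddMonoidHom.mem_ker, hπker, AddSubgroup.mem_zmultiples_iff]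
  have hπvd : π ((v, -(d : ℤ)) : (Fin r → ℤ) × ℤ) = 0 :=
    (hmem _).mpr ⟨1, one_smul _ _⟩
  have hπgu : (g : ℤ) • π u = 0 := by
    rw [← map_zsmul, hgu, hπvd]
  -- the homomorphism `ℤ →+ H` sending `n` to `n • π u`
  set f : ℤ →+ H := zmultiplesHom H (π u) with hf
  have hfapp : ∀ n : ℤ, f n = n • π u := fun n => rfl
  -- kernel of f
  have hfker : ∀ n : ℤ, f n = 0 ↔ (g : ℤ) ∣ n := by
    intro n
    rw [hfapp, ← map_zsmul, hmem]
    constructor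
    · rintro ⟨m, hm⟩
      have h2 := congrArg Prod.snd hm
      simp only [Prod.smul_snd, smul_eq_mul, hu] at h2
      rw [hdd'] at h2
      have h2' : m * (g : ℤ) * d' = n * d' := by linear_combination -h2
      have := mul_right_cancel₀ hd'ne h2'
      exact ⟨m, by linarith⟩
    · rintro ⟨m, rfl⟩
      refine ⟨m, Prod.ext ?_ ?_⟩
      · show m • v = ((g : ℤ) * m) • (lam' • v₀)
        rw [hv, smul_smul, smul_smul, hll']
        congr 1
        ring
      · show m * (-(d : ℤ)) = ((g : ℤ) * m) * (-d')
        rw [hdd']; ring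
  -- every torsion element is in the range of f
  have hrange : ∀ x : H, IsOfFinAddOrder x → ∃ j : ℤ, f j = x := by
    intro x hx
    obtain ⟨w, rfl⟩ := hπsurj x
    obtain ⟨k, hk, hkx⟩ := isOfFinAddOrder_iff_nsmul_eq_zero.mp hx
    have hkz : π ((k : ℤ) • w) = 0 := by
      rw [map_zsmul, natCast_zsmul, hkx]
    obtain ⟨m, hm⟩ := (hmem _).mp hkz
    set e : ℤ := (k : ℤ) with he
    have hepos : (0 : ℤ) < e := by rw [he]; exact_mod_cast hk
    have hene : e ≠ 0 := hepos.ne'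
    obtain ⟨p, n⟩ := w
    have h1 : ∀ i, e * p i = (m * lam) * v₀ i := by
      intro i
      have h := congrArg Prod.fst hm
      simp only [Prod.smul_fst] at h
      have h' := congrFun h i
      simp only [Pi.smul_apply, smul_eq_mul, hv] at h'
      linear_combination -h'
    have h2 : e * n = -(m * (d : ℤ)) := by
      have h := congrArg Prod.snd hm
      simp only [Prod.smul_snd, smul_eq_mul] at h
      linear_combination -h
    -- show e ∣ m * lam using primitivity of v₀
    have hedvd : e ∣ m * lam := by
      set c : ℕ := Int.gcd e (m * lam) with hc
      have hcpos : 0 < c := Int.gcd_pos_of_ne_zero_left (m * lam) hene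
      have hcZpos : (0 : ℤ) < (c : ℤ) := by exact_mod_cast hcpos
      have hce : (c : ℤ) ∣ e := Int.gcd_dvd_left e (m * lam)
      have hct : (c : ℤ) ∣ m * lam := Int.gcd_dvd_right e (m * lam)
      have hee : e = (c : ℤ) * (e / c) := (Int.mul_ediv_cancel' hce).symm
      have htt : m * lam = (c : ℤ) * (m * lam / c) := (Int.mul_ediv_cancel' hct).symm
      have hcop2 : Int.gcd (e / c) (m * lam / c) = 1 := Int.gcd_div_gcd_div_gcd hcpos
      have he1pos : 0 < e / c := by
        rcases lt_trichotomy (e / c) 0 with h | h | h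
        · nlinarith
        · rw [h, mul_zero] at hee; exact absurd hee hene
        · exact h
      have hdvd : ∀ i, (e / c) ∣ v₀ i := by
        intro i
        have hkey : (e / c) ∣ (m * lam / c) * v₀ i := by
          refine ⟨p i, ?_⟩
          have h1' := h1 i
          have hcc : (c : ℤ) * ((e / c) * p i) = (c : ℤ) * ((m * lam / c) * v₀ i) := by
            rw [← mul_assoc, ← mul_assoc, ← hee, ← htt]
            linear_combination h1'
          exact mul_left_cancel₀ hcZpos.ne' hcc.symm
        exact Int.dvd_of_dvd_mul_right_of_gcd_one hkey hcop2
      have h1eq := hprim (e / c) he1pos hdvd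
      rw [hee, h1eq, mul_one]
      exact hct
    obtain ⟨a, ha⟩ := hedvd
    have ht' : m * lam = e * a := ha
    have hp : ∀ i, p i = a * v₀ i := by
      intro i
      have h1' := h1 i
      have : e * p i = e * (a * v₀ i) := by
        rw [h1', ht']; ring
      exact mul_left_cancel₀ hene this
    have had : a * d' + n * lam' = 0 := by
      have hh : e * (a * d') = e * (-(n * lam')) := by
        linear_combination (-d') * ht' + lam' * h2 + (m * d') * hll' + (-(m * lam')) * hdd'
      have := mul_left_cancel₀ hene hh
      linarith
    refine ⟨a * α - n * β, ?_⟩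
    have hj1 : (a * α - n * β) * lam' = a := by
      linear_combination a * hαβ + (-β) * had
    have hj2 : (a * α - n * β) * d' = -n := by
      linear_combination α * had + (-n) * hαβ
    rw [hfapp, ← map_zsmul]
    congr 1
    rw [hu, Prod.smul_mk]
    refine Prod.ext ?_ ?_
    · show (a * α - n * β) • (lam' • v₀) = p
      funext i
      simp only [Pi.smul_apply, smul_eq_mul]
      rw [hp i, ← mul_assoc, hj1]
    · show (a * α - n * β) • (-d') = n
      rw [smul_eq_mul]
      linear_combination -hj2
  -- f has range exactly the torsion subgroup and kernel gℤ
  have hker_eq : f.ker = AddSubgroup.zmultiples ((g : ℤ) : ℤ) := by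
    ext n
    rw [AddMonoidHom.mem_ker, hfker, Int.mem_zmultiples_iff]
  have hrange_eq : f.range = AddCommGroup.torsion H := by
    ext x
    rw [AddMonoidHom.mem_range, AddCommGroup.mem_torsion]
    constructor
    · rintro ⟨n, rfl⟩
      rw [isOfFinAddOrder_iff_nsmul_eq_zero]
      refine ⟨g, hgpos, ?_⟩
      rw [hfapp, ← natCast_zsmul, smul_comm, hπgu, smul_zero]
    · intro hx
      exact hrange x hx
  exact ⟨((AddEquiv.addSubgroupCongr hrange_eq).symm.trans
    (QuotientAddGroup.quotientKerEquivRange f).symm).trans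
    ((QuotientAddGroup.quotientAddEquivOfEq hker_eq).trans
      (Int.quotientZMultiplesNatEquivZMod g))⟩
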